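/- Let N⁽ⁿ⁾ be as in the change-point construction and assume the marginal almost-sure convergence (N⁽ⁿ⁾_{n(t+h)} − N⁽ⁿ⁾_{nt})/(nh) → 1/μ_ri(h,t) holds for each fixed t. Then the convergence is uniform over t ∈ [0, T - h]: almost surely, sup_{t∈[0,T-h]} |(N⁽ⁿ⁾_{n(t+h)} − N⁽ⁿ⁾_{nt})/(nh) − 1/μ_ri(h,t)| → 0 as n → ∞. -/

import Mathlib

open MeasureTheory ProbabilityTheory Filter Set Real Topology

lemma sum_Icc_one_eq_range (f : ℕ → ℝ) (j : ℕ) :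
    ∑ i ∈ Finset.Icc 1 j, f i = ∑ i ∈ Finset.range j, f (i + 1) := by
  rw [← Finset.Ico_add_one_right_eq_Icc, Finset.sum_Ico_eq_sum_range]
  have : j + 1 - 1 = j := by omega
  rw [this]
  exact Finset.sum_congr rfl fun i _ => by rw [Nat.add_comm]

/-- Deterministic renewal lemma. -/
lemma renewal_count_aux {x : ℕ → ℝ} {m : ℝ} (hm : 0 < m)
    (hs : Tendsto (fun j : ℕ => (∑ i ∈ Finset.Icc 1 j, x i) / j) atTop (𝓝 m))
    (ν : ℝ → ℕ)
    (hν : ∀ u : ℝ, ∀ j : ℕ, 1 ≤ j → ((∑ i ∈ Finset.Icc 1 j, x i) ≤ u ↔ j ≤ ν u))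
    {a : ℝ} (ha : 0 < a) :
    Tendsto (fun n : ℕ => (ν ((n : ℝ) * a) : ℝ) / n) atTop (𝓝 (a / m)) := by
  set s : ℕ → ℝ := fun j => ∑ i ∈ Finset.Icc 1 j, x i with hsdef
  have hub : ∀ (u : ℝ) (j : ℕ), 1 ≤ j → s j ≤ u → j ≤ ν u := fun u j h1 h2 => (hν u j h1).1 h2
  have hlb : ∀ u : ℝ, 1 ≤ ν u → s (ν u) ≤ u := fun u h1 => (hν u (ν u) h1).2 le_rfl
  have hts : ∀ u : ℝ, u < s (ν u + 1) := by
    intro u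
    by_contra hcon
    push_neg at hcon
    have := (hν u (ν u + 1) (Nat.succ_le_succ (Nat.zero_le _))).1 hcon
    omega
  have hna : Tendsto (fun n : ℕ => (n : ℝ) * a) atTop atTop :=
    Tendsto.atTop_mul_const ha tendsto_natCast_atTop_atTop
  have hν_top : Tendsto (fun n : ℕ => ν ((n : ℝ) * a)) atTop atTop := by
    rw [tendsto_atTop]
    intro j
    filter_upwards [hna.eventually_ge_atTop (s (max j 1))] with n hn
    exact le_trans (le_max_left j 1) (hub _ _ (le_max_right j 1) hn)
  have hcomp1 : Tendsto (fun n : ℕ => s (ν ((n : ℝ) * a)) / (ν ((n : ℝ) * a) : ℝ))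
      atTop (𝓝 m) := hs.comp hν_top
  have hcomp2 : Tendsto (fun n : ℕ => s (ν ((n : ℝ) * a) + 1) / ((ν ((n : ℝ) * a) : ℝ) + 1))
      atTop (𝓝 m) := by
    have := hs.comp ((tendsto_add_atTop_nat 1).comp hν_top)
    refine this.congr fun n => ?_
    simp [Function.comp]
    rfl
  have hratio : Tendsto (fun n : ℕ => ((ν ((n : ℝ) * a) : ℝ) + 1) / (ν ((n : ℝ) * a) : ℝ))
      atTop (𝓝 1) := by
    have h0 : Tendsto (fun k : ℕ => 1 + 1 / (k : ℝ)) atTop (𝓝 (1 + 0)) :=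
      tendsto_const_nhds.add tendsto_one_div_atTop_nhds_zero_nat
    rw [add_zero] at h0
    have h1 : Tendsto (fun k : ℕ => ((k : ℝ) + 1) / k) atTop (𝓝 1) := by
      refine h0.congr' ?_
      filter_upwards [eventually_ge_atTop 1] with k hk
      have hk0 : (k : ℝ) ≠ 0 := Nat.cast_ne_zero.2 (by omega)
      field_simp
    exact h1.comp hν_top
  have upper : Tendsto (fun n : ℕ => s (ν ((n : ℝ) * a) + 1) / (ν ((n : ℝ) * a) : ℝ))
      atTop (𝓝 m) := by
    have := hcomp2.mul hratio
    rw [mul_one] at this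
    refine this.congr' ?_
    filter_upwards [hν_top.eventually_ge_atTop 1] with n hn
    have h0 : ((ν ((n : ℝ) * a) : ℝ)) ≠ 0 := Nat.cast_ne_zero.2 (by omega)
    have h1 : ((ν ((n : ℝ) * a) : ℝ)) + 1 ≠ 0 := by positivity
    field_simp
  have hsq : Tendsto (fun n : ℕ => ((n : ℝ) * a) / (ν ((n : ℝ) * a) : ℝ)) atTop (𝓝 m) := by
    refine tendsto_of_tendsto_of_tendsto_of_le_of_le' hcomp1 upper ?_ ?_
    · filter_upwards [hν_top.eventually_ge_atTop 1] with n hn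
      have h0 : (0 : ℝ) < (ν ((n : ℝ) * a) : ℝ) := by
        exact_mod_cast Nat.pos_of_ne_zero (by omega)
      exact (div_le_div_iff_of_pos_right h0).2 (hlb _ hn)
    · filter_upwards [hν_top.eventually_ge_atTop 1] with n hn
      have h0 : (0 : ℝ) < (ν ((n : ℝ) * a) : ℝ) := by
        exact_mod_cast Nat.pos_of_ne_zero (by omega)
      exact (div_le_div_iff_of_pos_right h0).2 (hts _).le
  have hfin : Tendsto (fun n : ℕ => a / (((n : ℝ) * a) / (ν ((n : ℝ) * a) : ℝ)))
      atTop (𝓝 (a / m)) := tendsto_const_nhds.div hsq (ne_of_gt hm)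
  refine hfin.congr' ?_
  filter_upwards [eventually_ge_atTop 1, hν_top.eventually_ge_atTop 1] with n hn hνn
  have h0 : ((ν ((n : ℝ) * a) : ℝ)) ≠ 0 := Nat.cast_ne_zero.2 (by omega)
  have hn0 : ((n : ℝ)) ≠ 0 := Nat.cast_ne_zero.2 (by omega)
  field_simp

/-- Pólya-type theorem. -/
lemma polya_uniform {f : ℕ → ℝ → ℝ} {g : ℝ → ℝ} {a b : ℝ}
    (hf : ∀ n, Monotone (f n)) (hg : ContinuousOn g (Set.Icc a b))
    (hconv : ∀ x ∈ Set.Icc a b, Tendsto (fun n => f n x) atTop (𝓝 (g x))) :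
    TendstoUniformlyOn f g atTop (Set.Icc a b) := by
  rcases lt_or_ge b a with hab | hab
  · rw [Set.Icc_eq_empty_of_lt hab]
    exact tendstoUniformlyOn_empty
  rw [Metric.tendstoUniformlyOn_iff]
  intro ε hε
  have hucg : UniformContinuousOn g (Set.Icc a b) :=
    isCompact_Icc.uniformContinuousOn_of_continuous hg
  rw [Metric.uniformContinuousOn_iff] at hucg
  obtain ⟨δ, hδ, hgδ⟩ := hucg (ε / 3) (by linarith)
  obtain ⟨K, hK⟩ := exists_nat_gt ((b - a) / δ)
  have hK0 : 0 < K := by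
    have h1 : (0 : ℝ) ≤ (b - a) / δ := div_nonneg (by linarith) hδ.le
    have : (0 : ℝ) < K := lt_of_le_of_lt h1 hK
    exact_mod_cast this
  have hKR : (0 : ℝ) < K := by exact_mod_cast hK0
  set η := (b - a) / K with hηdef
  have hη0 : 0 ≤ η := div_nonneg (by linarith) hKR.le
  have hηδ : η < δ := by
    rw [hηdef, div_lt_iff₀ hKR]
    have := (div_lt_iff₀ hδ).1 hK
    nlinarith
  set u : ℕ → ℝ := fun j => a + j * η with hudef
  have hKη : a + K * η = b := by
    rw [hηdef]
    field_simp
    ring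
  have humem : ∀ j : ℕ, j ≤ K → u j ∈ Set.Icc a b := by
    intro j hj
    constructor
    · simp only [hudef]
      nlinarith [mul_nonneg (Nat.cast_nonneg (α := ℝ) j) hη0]
    · have : (j : ℝ) * η ≤ K * η :=
        mul_le_mul_of_nonneg_right (by exact_mod_cast hj) hη0
      simp only [hudef]
      linarith
  have hev : ∀ᶠ n in atTop, ∀ j ∈ Finset.range (K + 1), |g (u j) - f n (u j)| < ε / 3 := by
    rw [eventually_all_finset]
    intro j hj
    have hjK : j ≤ K := by
      have := Finset.mem_range.1 hj
      omega
    have h1 := (Metric.tendsto_nhds.1 (hconv (u j) (humem j hjK))) (ε / 3) (by linarith)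
    filter_upwards [h1] with n hn
    rw [Real.dist_eq, abs_sub_comm] at hn
    exact hn
  filter_upwards [hev] with n hn x hx
  by_cases hη : η = 0
  · have hba : b = a := by
      have h8 : b - a = 0 := by
        have h7 := hηdef
        rw [hη] at h7
        field_simp at h7
        linarith [h7]
      linarith
    have hxa : x = a := le_antisymm (hba ▸ hx.2) hx.1
    have := hn 0 (Finset.mem_range.2 (by omega))
    rw [Real.dist_eq]
    have h9 : u 0 = a := by simp [hudef]
    rw [h9] at this
    rw [hxa]
    linarith [this]
  have hηpos : 0 < η := lt_of_le_of_ne hη0 (Ne.symm hη)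
  set j : ℕ := min (K - 1) ⌊(x - a) / η⌋₊ with hjdef
  have hjK : j + 1 ≤ K := by
    have : j ≤ K - 1 := min_le_left _ _
    omega
  have hj1 : u j ≤ x := by
    have h1 : (j : ℝ) ≤ (x - a) / η := by
      have h2 : (j : ℕ) ≤ ⌊(x - a) / η⌋₊ := min_le_right _ _
      have h3 : ((⌊(x - a) / η⌋₊ : ℕ) : ℝ) ≤ (x - a) / η :=
        Nat.floor_le (div_nonneg (by linarith [hx.1]) hηpos.le)
      exact le_trans (by exact_mod_cast h2) h3
    have := (le_div_iff₀ hηpos).1 h1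
    simp only [hudef]
    linarith
  have hj2 : x ≤ u (j + 1) := by
    rcases le_or_gt ⌊(x - a) / η⌋₊ (K - 1) with hc | hc
    · have hjeq : j = ⌊(x - a) / η⌋₊ := by omega
      have h1 : (x - a) / η < j + 1 := by
        rw [hjeq]
        exact Nat.lt_floor_add_one _
      have := (div_lt_iff₀ hηpos).1 h1
      simp only [hudef]
      push_cast
      linarith
    · have hjeq : j = K - 1 := by omega
      have h5 : j + 1 = K := by omega
      rw [h5]
      simp only [hudef]
      rw [hKη]
      exact hx.2
  have hjm : j < K + 1 := by omega
  have hj1m : j + 1 < K + 1 := by omega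
  have hA := hn j (Finset.mem_range.2 hjm)
  have hB := hn (j + 1) (Finset.mem_range.2 hj1m)
  have hdists : |u (j + 1) - x| < δ ∧ |u j - x| < δ := by
    have h1 : u (j + 1) - u j = η := by
      simp only [hudef]
      push_cast
      ring
    constructor
    · rw [abs_of_nonneg (by linarith)]
      linarith
    · rw [abs_of_nonpos (by linarith)]
      linarith
  have hgB : |g (u (j + 1)) - g x| < ε / 3 := by
    have := hgδ (u (j + 1)) (humem _ hjK) x hx (by rw [Real.dist_eq]; exact hdists.1)
    rwa [Real.dist_eq] at this
  have hgA : |g (u j) - g x| < ε / 3 := by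
    have := hgδ (u j) (humem _ (by omega)) x hx (by rw [Real.dist_eq]; exact hdists.2)
    rwa [Real.dist_eq] at this
  have hfx1 : f n x ≤ f n (u (j + 1)) := hf n hj2
  have hfx2 : f n (u j) ≤ f n x := hf n hj1
  rw [Real.dist_eq]
  rw [abs_sub_lt_iff] at hA hB hgA hgB ⊢
  constructor
  · linarith [hB.1, hgB.2]
  · linarith [hA.2, hgA.1]
/-- Uniform strong law for counting increments of the compound process with one change
point: if the marginal a.s. convergence holds for each fixed t, the convergence is
uniform over t ∈ [0, T - h]. -/
theorem compound_counting_uniform_slln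
    {Ω : Type*} [MeasurableSpace Ω] (P : Measure Ω) [IsProbabilityMeasure P]
    (ξ₁ ξ₂ : ℕ → Ω → ℝ)
    (hmeas₁ : ∀ i, Measurable (ξ₁ i)) (hmeas₂ : ∀ i, Measurable (ξ₂ i))
    (hindep : iIndepFun (m := fun _ => Real.measurableSpace) (Sum.elim ξ₁ ξ₂) P)
    (hident₁ : ∀ i, Measure.map (ξ₁ i) P = Measure.map (ξ₁ 1) P)
    (hident₂ : ∀ i, Measure.map (ξ₂ i) P = Measure.map (ξ₂ 1) P)
    (hpos₁ : ∀ i, ∀ᵐ ω ∂P, 0 < ξ₁ i ω) (hpos₂ : ∀ i, ∀ᵐ ω ∂P, 0 < ξ₂ i ω)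
    (μ₁ μ₂ : ℝ) (hμ₁ : 0 < μ₁) (hμ₂ : 0 < μ₂)
    (hmean₁ : ∫ ω, ξ₁ 1 ω ∂P = μ₁) (hmean₂ : ∫ ω, ξ₂ 1 ω ∂P = μ₂)
    (hL2₁ : MemLp (ξ₁ 1) 2 P) (hL2₂ : MemLp (ξ₂ 1) 2 P)
    (S₁ S₂ : ℕ → Ω → ℝ)
    (hS₁ : ∀ j ω, S₁ j ω = ∑ i ∈ Finset.Icc 1 j, ξ₁ i ω)
    (hS₂ : ∀ j ω, S₂ j ω = ∑ i ∈ Finset.Icc 1 j, ξ₂ i ω)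
    (N₁ N₂ : ℝ → Ω → ℕ)
    (hN₁ : ∀ u : ℝ, ∀ ω, ∀ j : ℕ, 1 ≤ j → (S₁ j ω ≤ u ↔ j ≤ N₁ u ω))
    (hN₂ : ∀ u : ℝ, ∀ ω, ∀ j : ℕ, 1 ≤ j → (S₂ j ω ≤ u ↔ j ≤ N₂ u ω))
    (T c h : ℝ) (hT : 0 < T) (hc : c ∈ Set.Ioo 0 T) (hh : h ∈ Set.Ioc 0 (T / 2))
    (Nn : ℕ → ℝ → Ω → ℕ)
    (hNn : ∀ n : ℕ, ∀ u : ℝ, ∀ ω, Nn n u ω =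
      if u ≤ (n : ℝ) * c then N₁ u ω
      else N₁ ((n : ℝ) * c) ω + (N₂ u ω - N₂ ((n : ℝ) * c) ω))
    (muri : ℝ → ℝ)
    (hmuri : ∀ t, muri t =
      if t ≤ c - h then μ₁
      else if t ≤ c then h * μ₁ * μ₂ / ((c - t) * μ₂ + (t + h - c) * μ₁)
      else μ₂)
    (hmarg : ∀ t ∈ Set.Icc (0 : ℝ) (T - h), ∀ᵐ ω ∂P, Tendsto
      (fun n : ℕ =>
        (((Nn n ((n : ℝ) * (t + h)) ω : ℝ) - (Nn n ((n : ℝ) * t) ω : ℝ)) / ((n : ℝ) * h)))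
      atTop (nhds (1 / muri t))) :
    ∀ᵐ ω ∂P, TendstoUniformlyOn
      (fun (n : ℕ) (t : ℝ) =>
        (((Nn n ((n : ℝ) * (t + h)) ω : ℝ) - (Nn n ((n : ℝ) * t) ω : ℝ)) / ((n : ℝ) * h)))
      (fun t => 1 / muri t) atTop (Set.Icc 0 (T - h)) := by
  obtain ⟨hc0, hcT⟩ := hc
  obtain ⟨hh0, hhT⟩ := hh
  have hμ₁' : μ₁ ≠ 0 := ne_of_gt hμ₁
  have hμ₂' : μ₂ ≠ 0 := ne_of_gt hμ₂
  have hhne : h ≠ 0 := ne_of_gt hh0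
  -- monotonicity of the counting processes
  have monN₁ : ∀ ω', Monotone fun u => N₁ u ω' := by
    intro ω' u v huv
    rcases Nat.eq_zero_or_pos (N₁ u ω') with h0 | h1
    · simp only [h0]; exact Nat.zero_le _
    · exact (hN₁ v ω' _ h1).1 (le_trans ((hN₁ u ω' _ h1).2 le_rfl) huv)
  have monN₂ : ∀ ω', Monotone fun u => N₂ u ω' := by
    intro ω' u v huv
    rcases Nat.eq_zero_or_pos (N₂ u ω') with h0 | h1
    · simp only [h0]; exact Nat.zero_le _
    · exact (hN₂ v ω' _ h1).1 (le_trans ((hN₂ u ω' _ h1).2 le_rfl) huv)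
  have monNn : ∀ n : ℕ, ∀ ω', Monotone fun u => Nn n u ω' := by
    intro n ω' u v huv
    simp only
    rw [hNn, hNn]
    by_cases hv : v ≤ (n : ℝ) * c
    · rw [if_pos (le_trans huv hv), if_pos hv]
      exact monN₁ ω' huv
    · rw [if_neg hv]
      by_cases hu : u ≤ (n : ℝ) * c
      · rw [if_pos hu]
        exact le_trans (monN₁ ω' hu) (Nat.le_add_right _ _)
      · rw [if_neg hu]
        have h2 : N₂ u ω' ≤ N₂ v ω' := monN₂ ω' huv
        omega
  -- SLLN
  have slln₁ : ∀ᵐ ω ∂P, Tendsto (fun j : ℕ => S₁ j ω / j) atTop (𝓝 μ₁) := by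
    have hint : Integrable (ξ₁ 1) P := hL2₁.integrable one_le_two
    have hindep' : Pairwise (Function.onFun (fun f g => IndepFun f g P) (fun i => ξ₁ (i + 1))) := by
      intro i j hij
      exact hindep.indepFun (show (Sum.inl (i + 1) : ℕ ⊕ ℕ) ≠ Sum.inl (j + 1) by
        simp [hij])
    have hident' : ∀ i, IdentDistrib (ξ₁ (i + 1)) (ξ₁ (0 + 1)) P P := fun i =>
      ⟨(hmeas₁ _).aemeasurable, (hmeas₁ _).aemeasurable, by
        simp only [hident₁]⟩
    have key := strong_law_ae_real (fun i => ξ₁ (i + 1)) hint hindep' hident'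
    filter_upwards [key] with ω hω
    have e : P[(fun i => ξ₁ (i + 1)) 0] = μ₁ := hmean₁
    rw [e] at hω
    refine hω.congr fun j => ?_
    congr 1
    rw [hS₁, sum_Icc_one_eq_range]
  have slln₂ : ∀ᵐ ω ∂P, Tendsto (fun j : ℕ => S₂ j ω / j) atTop (𝓝 μ₂) := by
    have hint : Integrable (ξ₂ 1) P := hL2₂.integrable one_le_two
    have hindep' : Pairwise (Function.onFun (fun f g => IndepFun f g P) (fun i => ξ₂ (i + 1))) := by
      intro i j hij
      exact hindep.indepFun (show (Sum.inr (i + 1) : ℕ ⊕ ℕ) ≠ Sum.inr (j + 1) by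
        simp [hij])
    have hident' : ∀ i, IdentDistrib (ξ₂ (i + 1)) (ξ₂ (0 + 1)) P P := fun i =>
      ⟨(hmeas₂ _).aemeasurable, (hmeas₂ _).aemeasurable, by
        simp only [hident₂]⟩
    have key := strong_law_ae_real (fun i => ξ₂ (i + 1)) hint hindep' hident'
    filter_upwards [key] with ω hω
    have e : P[(fun i => ξ₂ (i + 1)) 0] = μ₂ := hmean₂
    rw [e] at hω
    refine hω.congr fun j => ?_
    congr 1
    rw [hS₂, sum_Icc_one_eq_range]
  have hpos₁' : ∀ᵐ ω ∂P, ∀ i, 0 < ξ₁ i ω := ae_all_iff.2 hpos₁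
  filter_upwards [slln₁, slln₂, hpos₁'] with ω hω1 hω2 hp1
  -- renewal limits
  have ren₁ : ∀ a : ℝ, 0 < a →
      Tendsto (fun n : ℕ => (N₁ ((n : ℝ) * a) ω : ℝ) / n) atTop (𝓝 (a / μ₁)) := by
    intro a ha
    refine renewal_count_aux (x := fun i => ξ₁ i ω) hμ₁ ?_ (fun u => N₁ u ω) ?_ ha
    · refine hω1.congr fun j => ?_
      rw [hS₁]
    · intro u j hj
      rw [← hS₁]
      exact hN₁ u ω j hj
  have ren₂ : ∀ a : ℝ, 0 < a →
      Tendsto (fun n : ℕ => (N₂ ((n : ℝ) * a) ω : ℝ) / n) atTop (𝓝 (a / μ₂)) := by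
    intro a ha
    refine renewal_count_aux (x := fun i => ξ₂ i ω) hμ₂ ?_ (fun u => N₂ u ω) ?_ ha
    · refine hω2.congr fun j => ?_
      rw [hS₂]
    · intro u j hj
      rw [← hS₂]
      exact hN₂ u ω j hj
  -- the cumulative normalized processes
  set Gn : ℕ → ℝ → ℝ := fun n u => (Nn n ((n : ℝ) * u) ω : ℝ) / ((n : ℝ) * h) with hGn
  set G : ℝ → ℝ := fun u => min u c / (μ₁ * h) + max (u - c) 0 / (μ₂ * h) with hG
  have hGnmono : ∀ n, Monotone (Gn n) := by
    intro n u v huv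
    rcases Nat.eq_zero_or_pos n with h0 | h1
    · simp [hGn, h0]
    · have hnh : (0 : ℝ) < (n : ℝ) * h := by
        have : (0 : ℝ) < (n : ℝ) := by exact_mod_cast h1
        positivity
      simp only [hGn]
      refine (div_le_div_iff_of_pos_right hnh).2 ?_
      exact_mod_cast monNn n ω (mul_le_mul_of_nonneg_left huv (Nat.cast_nonneg n))
  have hGc : Continuous G := by
    simp only [hG]
    exact ((continuous_id.min continuous_const).div_const _).add
      (((continuous_id.sub continuous_const).max continuous_const).div_const _)
  have hGconv : ∀ u ∈ Set.Icc (0 : ℝ) T, Tendsto (fun n => Gn n u) atTop (𝓝 (G u)) := by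
    intro u hu
    rcases eq_or_lt_of_le hu.1 with h0 | h0
    · -- u = 0
      have hN10 : N₁ 0 ω = 0 := by
        by_contra hne
        have h1 : 1 ≤ N₁ 0 ω := Nat.one_le_iff_ne_zero.2 hne
        have h2 : S₁ 1 ω ≤ 0 := (hN₁ 0 ω 1 le_rfl).2 h1
        rw [hS₁] at h2
        simp only [Finset.Icc_self, Finset.sum_singleton] at h2
        linarith [hp1 1]
      have hz : ∀ n, Gn n u = 0 := by
        intro n
        simp only [hGn, ← h0, mul_zero]
        rw [hNn, if_pos (by positivity), hN10]
        simp
      have hGz : G u = 0 := by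
        simp only [hG, ← h0]
        rw [min_eq_left hc0.le, max_eq_right (by linarith)]
        simp
      rw [hGz]
      exact tendsto_const_nhds.congr fun n => (hz n).symm
    · rcases le_or_gt u c with huc | huc
      · have heq : ∀ n, Gn n u = ((N₁ ((n : ℝ) * u) ω : ℝ) / n) / h := by
          intro n
          simp only [hGn]
          rw [hNn, if_pos (mul_le_mul_of_nonneg_left huc (Nat.cast_nonneg n)), div_div]
        have hlim := (ren₁ u h0).div_const h
        have hGu : G u = u / μ₁ / h := by
          simp only [hG]
          rw [min_eq_left huc, max_eq_right (by linarith)]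
          rw [zero_div, add_zero, div_div]
        rw [hGu]
        exact hlim.congr fun n => (heq n).symm
      · have hev : ∀ᶠ n : ℕ in atTop, ((N₁ ((n : ℝ) * c) ω : ℝ) / n +
            ((N₂ ((n : ℝ) * u) ω : ℝ) / n - (N₂ ((n : ℝ) * c) ω : ℝ) / n)) / h = Gn n u := by
          filter_upwards [eventually_ge_atTop 1] with n hn
          have hnR : (0 : ℝ) < n := by exact_mod_cast hn
          have hn0 : (n : ℝ) ≠ 0 := ne_of_gt hnR
          have hlt : (n : ℝ) * c < (n : ℝ) * u := by nlinarith
          simp only [hGn]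
          rw [hNn, if_neg (not_le.2 hlt)]
          have hle : N₂ ((n : ℝ) * c) ω ≤ N₂ ((n : ℝ) * u) ω := monN₂ ω hlt.le
          push_cast [hle]
          field_simp
        have hlim := ((ren₁ c hc0).add ((ren₂ u (lt_trans hc0 huc)).sub (ren₂ c hc0))).div_const h
        have hGu : G u = (c / μ₁ + (u / μ₂ - c / μ₂)) / h := by
          simp only [hG]
          rw [min_eq_right huc.le, max_eq_left (by linarith)]
          field_simp
        rw [hGu]
        exact hlim.congr' hev
  have HU : TendstoUniformlyOn Gn G atTop (Set.Icc 0 T) :=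
    polya_uniform hGnmono hGc.continuousOn hGconv
  -- conclude
  rw [Metric.tendstoUniformlyOn_iff] at HU ⊢
  intro ε hε
  filter_upwards [HU (ε / 2) (by linarith)] with n hn t ht
  have h1 := hn (t + h) ⟨by linarith [ht.1], by linarith [ht.2]⟩
  have h2 := hn t ⟨ht.1, by linarith [ht.2]⟩
  have hF : ((Nn n ((n : ℝ) * (t + h)) ω : ℝ) - (Nn n ((n : ℝ) * t) ω : ℝ)) / ((n : ℝ) * h)
      = Gn n (t + h) - Gn n t := by
    simp only [hGn]
    rw [sub_div]
  have hFlim : 1 / muri t = G (t + h) - G t := by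
    rw [hmuri]
    simp only [hG]
    split_ifs with hA hB
    · -- t ≤ c - h
      rw [min_eq_left (by linarith : t + h ≤ c), min_eq_left (by linarith : t ≤ c),
        max_eq_right (by linarith : t + h - c ≤ 0), max_eq_right (by linarith : t - c ≤ 0)]
      field_simp
      ring
    · -- c - h < t ≤ c
      have hD : 0 < (c - t) * μ₂ + (t + h - c) * μ₁ := by
        have h3 : 0 ≤ (c - t) * μ₂ := mul_nonneg (by linarith) hμ₂.le
        have h4 : 0 < (t + h - c) * μ₁ := mul_pos (by linarith) hμ₁
        linarith
      rw [min_eq_right (by linarith : c ≤ t + h), min_eq_left (by linarith : t ≤ c),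
        max_eq_left (by linarith : (0:ℝ) ≤ t + h - c), max_eq_right (by linarith : t - c ≤ 0)]
      rw [one_div_div]
      field_simp
      ring
    · -- c < t
      push_neg at hB
      rw [min_eq_right (by linarith : c ≤ t + h), min_eq_right (by linarith : c ≤ t),
        max_eq_left (by linarith : (0:ℝ) ≤ t + h - c), max_eq_left (by linarith : (0:ℝ) ≤ t - c)]
      field_simp
      ring
  rw [hF, hFlim, Real.dist_eq] at *
  have heq2 : (G (t + h) - G t) - (Gn n (t + h) - Gn n t)
      = (G (t + h) - Gn n (t + h)) - (G t - Gn n t) := by ring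
  rw [heq2]
  calc |(G (t + h) - Gn n (t + h)) - (G t - Gn n t)|
      ≤ |G (t + h) - Gn n (t + h)| + |G t - Gn n t| := abs_sub _ _
    _ < ε := by linarith
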